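/- Let G be a unit interval graph on n ≥ 2 vertices with no isolated vertices, represented by unit intervals I_1,...,I_n with distinct endpoints a_i < b_i = a_i + 1, ordered so that a_1 < a_2 < ... < a_n. Then the sum over i = 1,...,n−1 of |N(v_i) ⊗ N(v_{i+1})| is at most 2n − 3; consequently some consecutive pair v_t, v_{t+1} satisfies |N(v_t) ⊗ N(v_{t+1})| ≤ 1. -/
import Mathlib


open scoped Classical

/-- In a unit interval representation, the adjacency relation: intervals
`[a i, a i + 1]` and `[a j, a j + 1]` intersect (and `i ≠ j`). -/
def UIAdj (a : ℕ → ℝ) (i j : ℕ) : Prop := i ≠ j ∧ |a i - a j| ≤ 1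

/-- The size of the symmetric difference of the neighbourhoods of `i` and `j`
(excluding `i` and `j`) among the vertices `0, …, n-1`. -/
noncomputable def UIsd (a : ℕ → ℝ) (n i j : ℕ) : ℕ :=
  ((Finset.range n).filter fun z => z ≠ i ∧ z ≠ j ∧ ¬ (UIAdj a z i ↔ UIAdj a z j)).card

/-- For a unit interval graph on `n ≥ 2` vertices (intervals `[a i, a i + 1]`,
left endpoints increasing, all `2n` endpoints distinct) with no isolated vertices,
the sum of the neighbourhood symmetric differences of consecutive vertices is at
most `2n - 3`; consequently some consecutive pair `v t, v (t+1)` has symmetric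
difference of size at most `1`. -/
theorem stmt10 (n : ℕ) (hn : 2 ≤ n) (a : ℕ → ℝ)
    (hmono : ∀ i j, i < j → j < n → a i < a j)
    (hdist : ∀ i j, i < n → j < n → a i ≠ a j + 1)
    (hnoiso : ∀ i < n, ∃ j < n, UIAdj a i j) :
    (∑ i ∈ Finset.range (n - 1), UIsd a n i (i + 1)) ≤ 2 * n - 3 ∧
    ∃ t, t + 1 < n ∧ UIsd a n t (t + 1) ≤ 1 := by
  have hmono' : ∀ i j, i ≤ j → j < n → a i ≤ a j := by
    intro i j hij hj
    rcases eq_or_lt_of_le hij with h | h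
    · rw [h]
    · exact (hmono i j h hj).le
  set Lf : ℕ → Finset ℕ := fun i =>
    (Finset.range n).filter (fun z => z < i ∧ a i ≤ a z + 1 ∧ a z + 1 < a (i+1)) with hLf
  set Rf : ℕ → Finset ℕ := fun i =>
    (Finset.range n).filter (fun z => i+1 < z ∧ a i + 1 < a z ∧ a z ≤ a (i+1) + 1) with hRf
  have hsplit : ∀ i, i + 1 < n → UIsd a n i (i+1) = (Lf i).card + (Rf i).card := by
    intro i hi
    have hii : a i < a (i+1) := hmono i (i+1) (by omega) hi
    have hdisj : Disjoint (Lf i) (Rf i) := by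
      rw [Finset.disjoint_left]
      intro z hz hz'
      simp only [hLf, hRf, Finset.mem_filter] at hz hz'
      omega
    rw [UIsd, ← Finset.card_union_of_disjoint hdisj, hLf, hRf, ← Finset.filter_or]
    congr 1
    apply Finset.filter_congr
    intro z hz
    simp only [Finset.mem_range] at hz
    constructor
    · rintro ⟨hzi, hzi1, hne⟩
      rcases lt_or_gt_of_ne hzi with h | h
      · left
        have hlt : a z < a i := hmono z i h (by omega)
        have hlt1 : a z < a (i+1) := hmono z (i+1) (by omega) hi
        refine ⟨h, ?_, ?_⟩
        · by_contra hc
          push_neg at hc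
          apply hne
          constructor
          · rintro ⟨_, habs⟩
            rw [abs_sub_le_iff] at habs
            exact absurd habs.2 (by linarith)
          · rintro ⟨_, habs⟩
            rw [abs_sub_le_iff] at habs
            exact absurd habs.2 (by linarith)
        · by_contra hc
          push_neg at hc
          apply hne
          constructor
          · rintro ⟨_, habs⟩
            refine ⟨hzi1, ?_⟩
            rw [abs_sub_le_iff] at habs ⊢
            exact ⟨by linarith, by linarith [habs.2]⟩
          · rintro ⟨_, habs⟩
            refine ⟨hzi, ?_⟩
            rw [abs_sub_le_iff] at habs ⊢
            exact ⟨by linarith, by linarith⟩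
      · right
        have h' : i + 1 < z := by omega
        have hlt : a i < a z := hmono i z (by omega) hz
        have hlt1 : a (i+1) < a z := hmono (i+1) z h' hz
        refine ⟨h', ?_, ?_⟩
        · by_contra hc
          push_neg at hc
          apply hne
          constructor
          · rintro ⟨_, habs⟩
            refine ⟨hzi1, ?_⟩
            rw [abs_sub_le_iff] at habs ⊢
            exact ⟨by linarith, by linarith⟩
          · rintro ⟨_, habs⟩
            refine ⟨hzi, ?_⟩
            rw [abs_sub_le_iff] at habs ⊢
            exact ⟨by linarith, by linarith⟩
        · by_contra hc
          push_neg at hc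
          apply hne
          constructor
          · rintro ⟨_, habs⟩
            rw [abs_sub_le_iff] at habs
            exact absurd habs.1 (by linarith)
          · rintro ⟨_, habs⟩
            rw [abs_sub_le_iff] at habs
            exact absurd habs.1 (by linarith)
    · rintro (⟨hzlt, h1, h2⟩ | ⟨hzgt, h1, h2⟩)
      · have hlt : a z < a i := hmono z i hzlt (by omega)
        refine ⟨by omega, by omega, ?_⟩
        intro hiff
        have hadj : UIAdj a z i := by
          refine ⟨by omega, ?_⟩
          rw [abs_sub_le_iff]
          constructor <;> linarith
        have hadj1 := hiff.mp hadj
        rw [UIAdj, abs_sub_le_iff] at hadj1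
        linarith [hadj1.2.2]
      · have hlt : a (i+1) < a z := hmono (i+1) z hzgt hz
        refine ⟨by omega, by omega, ?_⟩
        intro hiff
        have hadj : UIAdj a z (i+1) := by
          refine ⟨by omega, ?_⟩
          rw [abs_sub_le_iff]
          constructor <;> linarith
        have hadj0 := hiff.mpr hadj
        rw [UIAdj, abs_sub_le_iff] at hadj0
        linarith [hadj0.2.1]
  have hLdisj : ∀ x ∈ Finset.range (n-1), ∀ y ∈ Finset.range (n-1), x ≠ y →
      Disjoint (Lf x) (Lf y) := by
    have key : ∀ x y, x < y → y < n - 1 → Disjoint (Lf x) (Lf y) := by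
      intro x y hxy hy
      rw [Finset.disjoint_left]
      intro z hz hz'
      simp only [hLf, Finset.mem_filter] at hz hz'
      have : a (x+1) ≤ a y := hmono' (x+1) y (by omega) (by omega)
      linarith [hz.2.2.2, hz'.2.2.1]
    intro x hx y hy hxy
    simp only [Finset.mem_range] at hx hy
    rcases lt_or_gt_of_ne hxy with h | h
    · exact key x y h hy
    · exact (key y x h hx).symm
  have hRdisj : ∀ x ∈ Finset.range (n-1), ∀ y ∈ Finset.range (n-1), x ≠ y →
      Disjoint (Rf x) (Rf y) := by
    have key : ∀ x y, x < y → y < n - 1 → Disjoint (Rf x) (Rf y) := by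
      intro x y hxy hy
      rw [Finset.disjoint_left]
      intro z hz hz'
      simp only [hRf, Finset.mem_filter] at hz hz'
      have : a (x+1) ≤ a y := hmono' (x+1) y (by omega) (by omega)
      linarith [hz.2.2.2, hz'.2.2.1]
    intro x hx y hy hxy
    simp only [Finset.mem_range] at hx hy
    rcases lt_or_gt_of_ne hxy with h | h
    · exact key x y h hy
    · exact (key y x h hx).symm
  have hLsum : ∑ i ∈ Finset.range (n-1), (Lf i).card ≤ n - 2 := by
    rw [← Finset.card_biUnion hLdisj]
    calc ((Finset.range (n-1)).biUnion Lf).card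
        ≤ (Finset.range (n-2)).card := by
          apply Finset.card_le_card
          intro z hz
          simp only [Finset.mem_biUnion, hLf, Finset.mem_filter, Finset.mem_range] at hz ⊢
          obtain ⟨i, hi, _, hzi, _⟩ := hz
          omega
      _ = n - 2 := Finset.card_range _
  have hRsum : ∑ i ∈ Finset.range (n-1), (Rf i).card ≤ n - 2 := by
    rw [← Finset.card_biUnion hRdisj]
    calc ((Finset.range (n-1)).biUnion Rf).card
        ≤ (Finset.Ico 2 n).card := by
          apply Finset.card_le_card
          intro z hz
          simp only [Finset.mem_biUnion, hRf, Finset.mem_filter, Finset.mem_range,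
            Finset.mem_Ico] at hz ⊢
          obtain ⟨i, hi, hzn, hzi, _⟩ := hz
          omega
      _ = n - 2 := by rw [Nat.card_Ico]
  have hsum : (∑ i ∈ Finset.range (n - 1), UIsd a n i (i + 1)) ≤ 2 * n - 3 := by
    have heq : (∑ i ∈ Finset.range (n - 1), UIsd a n i (i + 1))
        = ∑ i ∈ Finset.range (n-1), (Lf i).card + ∑ i ∈ Finset.range (n-1), (Rf i).card := by
      rw [← Finset.sum_add_distrib]
      apply Finset.sum_congr rfl
      intro i hi
      simp only [Finset.mem_range] at hi
      exact hsplit i (by omega)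
    omega
  refine ⟨hsum, ?_⟩
  by_contra hc
  push_neg at hc
  have hlb : ∀ i ∈ Finset.range (n-1), 2 ≤ UIsd a n i (i+1) := by
    intro i hi
    simp only [Finset.mem_range] at hi
    exact hc i (by omega)
  have := Finset.sum_le_sum hlb
  rw [Finset.sum_const, Finset.card_range, smul_eq_mul] at this
  omega
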